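/- arXiv:2502.05436 — 5 statements merged into one kernel-verified Lean document; each statement's English description precedes it below -/
import Mathlib

section
/- For a convex body K in R^n with 0 in its interior, the reverse radial Gauss image of K equals the radial Gauss image of the polar body: for every subset η ⊂ S^{n-1}, α*_K(η) = α_{K^*}(η), where α*_K(η) = {x/|x| : x ∈ ∂K, x lies in a supporting hyperplane of K with outer normal in η} and α_{K^*}(η) = {u ∈ S^{n-1} : ρ_{K^*}(u)u lies in a supporting hyperplane of K^* with outer normal in η}. -/
open Set MeasureTheory Metric Filter
open scoped RealInnerProductSpace Pointwise Topology

noncomputable section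

/-- Euclidean `n`-space. -/
abbrev Vn (n : ℕ) := EuclideanSpace ℝ (Fin n)

/-- The support function `h_K(x) = max {⟪y, x⟫ : y ∈ K}` of a compact convex set. -/
def suppFn {n : ℕ} (K : Set (Vn n)) (x : Vn n) : ℝ :=
  sSup ((fun y => ⟪y, x⟫) '' K)

/-- The radial function `ρ_K(x) = max {r ≥ 0 : r • x ∈ K}`. -/
def radFn {n : ℕ} (K : Set (Vn n)) (x : Vn n) : ℝ :=
  sSup {r : ℝ | 0 ≤ r ∧ r • x ∈ K}

/-- The polar body `K^* = {x : ⟪x, y⟫ ≤ 1 for all y ∈ K}`. -/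
def polarBody {n : ℕ} (K : Set (Vn n)) : Set (Vn n) :=
  {x | ∀ y ∈ K, ⟪x, y⟫ ≤ 1}

/-- The radial Gauss image: `α_K(ω) = {v ∈ S^{n-1} : ρ_K(u)u ∈ H_K(v) for some u ∈ ω}`. -/
def radGaussImage {n : ℕ} (K : Set (Vn n)) (ω : Set (Vn n)) : Set (Vn n) :=
  {v ∈ sphere (0 : Vn n) 1 | ∃ u ∈ ω, ⟪radFn K u • u, v⟫ = suppFn K v}

/-- The reverse radial Gauss image:
`α*_K(η) = {u ∈ S^{n-1} : ρ_K(u)u ∈ H_K(v) for some v ∈ η}`. -/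
def revRadGaussImage {n : ℕ} (K : Set (Vn n)) (η : Set (Vn n)) : Set (Vn n) :=
  {u ∈ sphere (0 : Vn n) 1 | ∃ v ∈ η, ⟪radFn K u • u, v⟫ = suppFn K v}

section aux

variable {n : ℕ} {K : Set (Vn n)}

lemma suppFn_isGreatest (hKcpt : IsCompact K) (hne : K.Nonempty) (v : Vn n) :
    IsGreatest ((fun y => ⟪y, v⟫) '' K) (suppFn K v) := by
  have hcont : ContinuousOn (fun y : Vn n => ⟪y, v⟫) K :=
    (Continuous.inner continuous_id continuous_const).continuousOn
  obtain ⟨y₀, hy₀K, hy₀⟩ := hKcpt.exists_isMaxOn hne hcont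
  have hG : IsGreatest ((fun y => ⟪y, v⟫) '' K) ⟪y₀, v⟫ :=
    ⟨⟨y₀, hy₀K, rfl⟩, by rintro _ ⟨y, hy, rfl⟩; exact hy₀ hy⟩
  rw [suppFn, hG.csSup_eq]
  exact hG

lemma suppFn_pos (hKcpt : IsCompact K) (h0 : (0 : Vn n) ∈ interior K)
    {v : Vn n} (hv : ‖v‖ = 1) : 0 < suppFn K v := by
  obtain ⟨ε, hε, hball⟩ := Metric.mem_nhds_iff.1 (mem_interior_iff_mem_nhds.1 h0)
  have hmem : (ε / 2) • v ∈ K := by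
    apply hball
    rw [mem_ball_zero_iff, norm_smul, hv, mul_one, Real.norm_eq_abs,
      abs_of_pos (half_pos hε)]
    linarith
  have h1 := (suppFn_isGreatest hKcpt ⟨0, interior_subset h0⟩ v).2 ⟨_, hmem, rfl⟩
  have hinner : ⟪(ε / 2) • v, v⟫ = ε / 2 := by
    rw [real_inner_smul_left, real_inner_self_eq_norm_sq, hv]; ring
  have h2 : (ε / 2 : ℝ) ≤ suppFn K v := by rw [← hinner]; exact h1
  linarith

lemma radFn_spec (hKcpt : IsCompact K) (h0 : (0 : Vn n) ∈ interior K)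
    {u : Vn n} (hu : ‖u‖ = 1) :
    0 < radFn K u ∧ radFn K u • u ∈ K ∧ radFn K u • u ∉ interior K := by
  obtain ⟨R, hR⟩ := hKcpt.isBounded.subset_closedBall 0
  obtain ⟨ε, hε, hball⟩ := Metric.mem_nhds_iff.1 (mem_interior_iff_mem_nhds.1 h0)
  set S := {r : ℝ | 0 ≤ r ∧ r • u ∈ K} with hS
  have hhalf : ε / 2 ∈ S := by
    refine ⟨(half_pos hε).le, hball ?_⟩
    rw [mem_ball_zero_iff, norm_smul, hu, mul_one, Real.norm_eq_abs,
      abs_of_pos (half_pos hε)]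
    linarith
  have hSne : S.Nonempty := ⟨_, hhalf⟩
  have hbdd : BddAbove S := by
    refine ⟨R, fun t ht => ?_⟩
    have := hR ht.2
    rw [mem_closedBall_zero_iff, norm_smul, hu, mul_one] at this
    exact le_trans (le_abs_self t) this
  have hScl : IsClosed S := by
    have : S = Ici (0:ℝ) ∩ (fun t : ℝ => t • u) ⁻¹' K := rfl
    rw [this]
    exact isClosed_Ici.inter (hKcpt.isClosed.preimage (continuous_id.smul continuous_const))
  have hmem : radFn K u ∈ S := hScl.csSup_mem hSne hbdd
  have hpos : 0 < radFn K u := lt_of_lt_of_le (half_pos hε) (le_csSup hbdd hhalf)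
  refine ⟨hpos, hmem.2, fun hin => ?_⟩
  obtain ⟨δ, hδ, hball'⟩ := Metric.mem_nhds_iff.1 (mem_interior_iff_mem_nhds.1 hin)
  have hmem' : (radFn K u + δ / 2) ∈ S := by
    refine ⟨by positivity, hball' ?_⟩
    rw [mem_ball_iff_norm]
    have : (radFn K u + δ / 2) • u - radFn K u • u = (δ / 2) • u := by
      rw [← sub_smul]; ring_nf
    rw [this, norm_smul, hu, mul_one, Real.norm_eq_abs, abs_of_pos (half_pos hδ)]
    exact half_lt_self hδ
  have h2 : radFn K u + δ / 2 ≤ radFn K u := le_csSup hbdd hmem'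
  linarith

/-- `ρ_{K*}(v) * h_K(v) = 1` for unit `v`. -/
lemma radFn_polar_mul (hKcpt : IsCompact K) (h0 : (0 : Vn n) ∈ interior K)
    {v : Vn n} (hv : ‖v‖ = 1) :
    radFn (polarBody K) v * suppFn K v = 1 := by
  have hne : K.Nonempty := ⟨0, interior_subset h0⟩
  have hG := suppFn_isGreatest hKcpt hne v
  have hpos := suppFn_pos hKcpt h0 hv
  set h := suppFn K v with hh
  obtain ⟨⟨y₀, hy₀K, hy₀⟩, hub⟩ := hG
  have hmem : (1 / h) • v ∈ polarBody K := by
    intro y hy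
    have h1 : ⟪y, v⟫ ≤ h := hub ⟨y, hy, rfl⟩
    rw [real_inner_smul_left, real_inner_comm]
    rw [div_mul_eq_mul_div, one_mul, div_le_one hpos]
    exact h1
  have hG2 : IsGreatest {r : ℝ | 0 ≤ r ∧ r • v ∈ polarBody K} (1 / h) := by
    constructor
    · exact ⟨by positivity, hmem⟩
    · rintro t ⟨ht0, htmem⟩
      have hy₀' : ⟪y₀, v⟫ = h := hy₀
      have h1 := htmem y₀ hy₀K
      rw [real_inner_smul_left, real_inner_comm, hy₀'] at h1
      rw [le_div_iff₀ hpos]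
      linarith
  rw [radFn, hG2.csSup_eq]
  field_simp

/-- `h_{K*}(u) * ρ_K(u) = 1` for unit `u`. -/
lemma suppFn_polar_mul (hKcpt : IsCompact K) (hKconv : Convex ℝ K)
    (h0 : (0 : Vn n) ∈ interior K) {u : Vn n} (hu : ‖u‖ = 1) :
    suppFn (polarBody K) u * radFn K u = 1 := by
  obtain ⟨hρpos, hρmem, hρnotin⟩ := radFn_spec hKcpt h0 hu
  set ρ := radFn K u with hρ
  -- supporting functional at ρ • u
  obtain ⟨f, hf⟩ := geometric_hahn_banach_open_point hKconv.interior isOpen_interior hρnotin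
  have hc0 : (0:ℝ) < f (ρ • u) := by
    have := hf 0 h0
    simpa using this
  have hfK : ∀ y ∈ K, f y ≤ f (ρ • u) := by
    intro y hy
    by_contra hcon
    push_neg at hcon
    have hfy : 0 < f y := lt_trans hc0 hcon
    set b := (f (ρ • u) + f y) / (2 * f y) with hb
    have hb0 : 0 < b := by positivity
    have hb1 : b < 1 := by
      rw [hb, div_lt_one (by positivity)]
      linarith
    have hmem : b • y ∈ interior K := by
      have := hKconv.combo_interior_self_mem_interior h0 hy
        (a := 1 - b) (b := b) (by linarith) hb0.le (by ring)
      simpa using this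
    have h3 := hf _ hmem
    have h4 : f (b • y) = b * f y := by rw [f.map_smul, smul_eq_mul]
    have h5 : b * f y = (f (ρ • u) + f y) / 2 := by
      rw [hb]; field_simp
    rw [h4, h5] at h3
    linarith
  set c := f (ρ • u) with hc
  set w := (InnerProductSpace.toDual ℝ (Vn n)).symm f with hw
  have hwf : ∀ y : Vn n, ⟪w, y⟫ = f y := fun y => InnerProductSpace.toDual_symm_apply
  set x := c⁻¹ • w with hx
  have hxK : x ∈ polarBody K := by
    intro y hy
    rw [hx, real_inner_smul_left, hwf]
    rw [inv_mul_le_iff₀ hc0, mul_one]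
    exact hfK y hy
  have hxu : ⟪x, u⟫ = 1 / ρ := by
    have hfu : f u = c / ρ := by
      have h1 : f (ρ • u) = ρ * f u := by rw [f.map_smul, smul_eq_mul]
      rw [← hc] at h1
      field_simp
      linarith
    rw [hx, real_inner_smul_left, hwf, hfu]
    field_simp
  have hG : IsGreatest ((fun y => ⟪y, u⟫) '' polarBody K) (1 / ρ) := by
    constructor
    · exact ⟨x, hxK, by rw [← hxu]⟩
    · rintro _ ⟨z, hz, rfl⟩
      have h1 : ⟪z, ρ • u⟫ ≤ 1 := hz _ hρmem
      rw [real_inner_smul_right] at h1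
      show ⟪z, u⟫ ≤ 1 / ρ
      rw [le_div_iff₀ hρpos, mul_comm]
      exact h1
  rw [suppFn, hG.csSup_eq]
  field_simp

/-- The key symmetric equivalence. -/
lemma key_iff (hKcpt : IsCompact K) (hKconv : Convex ℝ K)
    (h0 : (0 : Vn n) ∈ interior K) {u v : Vn n} (hu : ‖u‖ = 1) (hv : ‖v‖ = 1) :
    ⟪radFn K u • u, v⟫ = suppFn K v ↔
      ⟪radFn (polarBody K) v • v, u⟫ = suppFn (polarBody K) u := by
  have h1 := suppFn_polar_mul hKcpt hKconv h0 hu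
  have h2 := radFn_polar_mul hKcpt h0 hv
  obtain ⟨hρpos, -, -⟩ := radFn_spec hKcpt h0 hu
  have hbpos := suppFn_pos hKcpt h0 hv
  have hρ'pos : 0 < radFn (polarBody K) v := by nlinarith
  have hapos : 0 < suppFn (polarBody K) u := by nlinarith
  rw [real_inner_smul_left, real_inner_smul_left, real_inner_comm v u]
  constructor
  · intro h
    nlinarith [h]
  · intro h
    nlinarith [h]

end aux

/-- For a convex body `K` with `0` in its interior, the reverse radial Gauss image of `K`
equals the radial Gauss image of the polar body: `α*_K(η) = α_{K^*}(η)` for all `η ⊆ S^{n-1}`. -/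
theorem stmt8 {n : ℕ} (K : Set (Vn n)) (hKcpt : IsCompact K) (hKconv : Convex ℝ K)
    (h0 : (0 : Vn n) ∈ interior K) :
    ∀ η : Set (Vn n), η ⊆ sphere (0 : Vn n) 1 →
      revRadGaussImage K η = radGaussImage (polarBody K) η := by
  intro η hη
  ext x
  simp only [revRadGaussImage, radGaussImage, Set.mem_setOf_eq]
  constructor
  · rintro ⟨hx, v, hv, heq⟩
    exact ⟨hx, v, hv, (key_iff hKcpt hKconv h0 (mem_sphere_zero_iff_norm.1 hx)
      (mem_sphere_zero_iff_norm.1 (hη hv))).1 heq⟩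
  · rintro ⟨hx, v, hv, heq⟩
    exact ⟨hx, v, hv, (key_iff hKcpt hKconv h0 (mem_sphere_zero_iff_norm.1 hx)
      (mem_sphere_zero_iff_norm.1 (hη hv))).2 heq⟩
end
end

section
/- Let N > 0 and α_1,…,α_n > 0 satisfy α_1 + ⋯ + α_n = 1 and α_i + ⋯ + α_n < 1 − (i−1)/N for all i with 1 < i ≤ n. Then there exists t > 0 such that for all 0 < a_1 ≤ a_2 ≤ ⋯ ≤ a_n, Σ_{i=1}^n α_i log a_i ≤ ((1+t)/N) log(a_1 ⋯ a_n) + (1 − n(1+t)/N) log a_n. -/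
open Set MeasureTheory Metric Filter
open scoped RealInnerProductSpace Pointwise Topology

noncomputable section

lemma exists_pos_le_finset {ι : Type*} (s : Finset ι) (g : ι → ℝ)
    (h : ∀ i ∈ s, 0 < g i) : ∃ t : ℝ, 0 < t ∧ ∀ i ∈ s, t ≤ g i := by
  rcases s.eq_empty_or_nonempty with rfl | hs
  · exact ⟨1, one_pos, by simp⟩
  · exact ⟨min 1 (s.inf' hs g), lt_min one_pos ((Finset.lt_inf'_iff hs).2 h),
      fun i hi => (min_le_right _ _).trans (Finset.inf'_le g hi)⟩

/-- Elementary entropy-type inequality: if `N > 0` and positive `α_1,…,α_n` sum to `1` with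
`α_i + ⋯ + α_n < 1 − (i−1)/N` for `1 < i ≤ n`, then there is `t > 0` such that for all
`0 < a_1 ≤ ⋯ ≤ a_n`,
`Σ α_i log a_i ≤ ((1+t)/N) log(a_1⋯a_n) + (1 − n(1+t)/N) log a_n`. -/
theorem stmt12 {n : ℕ} (hn : 0 < n) (N : ℝ) (hN : 0 < N) (α : Fin n → ℝ)
    (hα : ∀ i, 0 < α i) (hsum : ∑ i, α i = 1)
    (hcond : ∀ i : Fin n, 0 < i.val →
      ∑ j ∈ Finset.univ.filter (fun j => i ≤ j), α j < 1 - (i.val : ℝ) / N) :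
    ∃ t : ℝ, 0 < t ∧ ∀ a : Fin n → ℝ, (∀ i, 0 < a i) → Monotone a →
      ∑ i, α i * Real.log (a i) ≤
        ((1 + t) / N) * Real.log (∏ i, a i) +
          (1 - (n : ℝ) * (1 + t) / N) * Real.log (a ⟨n - 1, by omega⟩) := by
  classical
  set α' : ℕ → ℝ := fun k => if h : k < n then α ⟨k, h⟩ else 0 with hα'def
  have hα'eq : ∀ i : Fin n, α' i.val = α i := by
    intro i; simp [hα'def, i.isLt]
  have hsum' : ∑ k ∈ Finset.range n, α' k = 1 := by
    rw [← Fin.sum_univ_eq_sum_range α' n]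
    simpa [hα'eq] using hsum
  have htail : ∀ m, 0 < m → m < n →
      ∑ k ∈ Finset.Ico m n, α' k < 1 - (m : ℝ) / N := by
    intro m hm hmn
    have h := hcond ⟨m, hmn⟩ hm
    have h1 : ∑ j ∈ Finset.univ.filter (fun j => (⟨m, hmn⟩ : Fin n) ≤ j), α j
        = ∑ j ∈ Finset.range n, if m ≤ j then α' j else 0 := by
      rw [Finset.sum_filter, ← Fin.sum_univ_eq_sum_range (fun j => if m ≤ j then α' j else 0) n]
      refine Finset.sum_congr rfl fun j _ => ?_
      simp [Fin.le_def, hα'eq]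
    have h3 : (∑ j ∈ Finset.range n, if m ≤ j then α' j else 0)
        = ∑ k ∈ Finset.Ico m n, α' k := by
      rw [← Finset.sum_filter]
      congr 1
      ext j
      simp only [Finset.mem_filter, Finset.mem_range, Finset.mem_Ico]
      omega
    rw [h1, h3] at h
    exact h
  obtain ⟨t, ht, htle⟩ := exists_pos_le_finset (Finset.Ico 1 n)
      (fun m => (1 - (m : ℝ) / N - ∑ k ∈ Finset.Ico m n, α' k) * N / (m : ℝ)) (by
    intro m hm
    rw [Finset.mem_Ico] at hm
    have h := htail m hm.1 hm.2
    have hm' : (0 : ℝ) < (m : ℝ) := by exact_mod_cast hm.1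
    exact div_pos (mul_pos (by linarith) hN) hm')
  have hP : ∀ m, 0 < m → m < n →
      (m : ℝ) * (1 + t) / N ≤ ∑ k ∈ Finset.range m, α' k := by
    intro m hm hmn
    have h1 := htle m (Finset.mem_Ico.2 ⟨hm, hmn⟩)
    have hm' : (0 : ℝ) < (m : ℝ) := by exact_mod_cast hm
    set T := ∑ k ∈ Finset.Ico m n, α' k with hT
    have h2 : ∑ k ∈ Finset.range m, α' k + T = 1 := by
      rw [hT, Finset.sum_range_add_sum_Ico α' (le_of_lt hmn)]
      exact hsum'
    have h3 : t * (m : ℝ) ≤ (1 - (m : ℝ) / N - T) * N := (le_div_iff₀ hm').1 h1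
    have hNne : N ≠ 0 := ne_of_gt hN
    have h4 : (1 - (m : ℝ) / N - T) * N = N - (m : ℝ) - T * N := by
      field_simp
    rw [div_le_iff₀ hN]
    nlinarith [h2, h3, h4]
  refine ⟨t, ht, fun a ha hmono => ?_⟩
  set C : ℝ := 1 - (n : ℝ) * (1 + t) / N with hC
  set b : ℕ → ℝ := fun k =>
    if h : k < n then Real.log (a ⟨k, h⟩) else Real.log (a ⟨n - 1, by omega⟩) with hbdef
  set d : ℕ → ℝ := fun k => ((1 + t) / N + (if k = n - 1 then C else 0)) - α' k with hddef
  have hn1 : n - 1 < n := by omega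
  have hd_sum : ∑ k ∈ Finset.range n, d k = 0 := by
    simp only [hddef]
    rw [Finset.sum_sub_distrib, Finset.sum_add_distrib, hsum',
      Finset.sum_ite_eq' (Finset.range n) (n - 1) (fun _ => C)]
    simp only [Finset.mem_range.2 hn1, if_true, Finset.sum_const, Finset.card_range,
      nsmul_eq_mul]
    rw [hC]
    field_simp
    ring
  have hPsum : ∀ k, k + 1 < n → ∑ j ∈ Finset.range (k + 1), d j ≤ 0 := by
    intro k hk
    have h1 : ∑ j ∈ Finset.range (k + 1), d j
        = ((k : ℝ) + 1) * ((1 + t) / N) - ∑ j ∈ Finset.range (k + 1), α' j := by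
      simp only [hddef]
      rw [Finset.sum_sub_distrib, Finset.sum_add_distrib]
      have : ∑ j ∈ Finset.range (k + 1), (if j = n - 1 then C else 0) = 0 :=
        Finset.sum_eq_zero fun j hj => by
          rw [Finset.mem_range] at hj
          rw [if_neg (by omega)]
      rw [this, Finset.sum_const, Finset.card_range, nsmul_eq_mul]
      push_cast
      ring
    have h2 := hP (k + 1) (Nat.succ_pos k) hk
    push_cast at h2
    rw [h1]
    have : ((k : ℝ) + 1) * ((1 + t) / N) = ((k : ℝ) + 1) * (1 + t) / N := by ring
    linarith [this ▸ h2]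
  have hb_mono : ∀ k, k + 1 < n → b k ≤ b (k + 1) := by
    intro k hk
    simp only [hbdef, dif_pos hk, dif_pos (Nat.lt_of_succ_lt hk)]
    exact Real.log_le_log (ha _) (hmono (by simp [Fin.mk_le_mk]))
  have habel := Finset.sum_range_by_parts b d n
  simp only [smul_eq_mul] at habel
  have hnonneg : 0 ≤ ∑ k ∈ Finset.range n, b k * d k := by
    rw [habel, hd_sum, mul_zero, zero_sub, neg_nonneg]
    refine Finset.sum_nonpos fun k hk => ?_
    rw [Finset.mem_range] at hk
    have hk' : k + 1 < n := by omega
    exact mul_nonpos_iff.2 (Or.inl ⟨by linarith [hb_mono k hk'], hPsum k hk'⟩)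
  have hL : ∑ i, α i * Real.log (a i) = ∑ k ∈ Finset.range n, α' k * b k := by
    rw [← Fin.sum_univ_eq_sum_range (fun k => α' k * b k) n]
    refine Finset.sum_congr rfl fun i _ => ?_
    simp [hα'eq, hbdef, i.isLt]
  have hlogprod : Real.log (∏ i, a i) = ∑ k ∈ Finset.range n, b k := by
    rw [Real.log_prod (fun i _ => (ha i).ne'),
      ← Fin.sum_univ_eq_sum_range (fun k => b k) n]
    exact Finset.sum_congr rfl fun i _ => by simp [hbdef, i.isLt]
  have hbn : b (n - 1) = Real.log (a ⟨n - 1, by omega⟩) := by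
    simp [hbdef, hn1]
  have hexp : ∑ k ∈ Finset.range n, b k * d k
      = ((1 + t) / N) * ∑ k ∈ Finset.range n, b k + C * b (n - 1)
        - ∑ k ∈ Finset.range n, α' k * b k := by
    simp only [hddef, mul_sub, mul_add]
    rw [Finset.sum_sub_distrib, Finset.sum_add_distrib]
    have h1 : (∑ k ∈ Finset.range n, b k * (if k = n - 1 then C else 0)) = C * b (n - 1) := by
      have : ∀ k ∈ Finset.range n, b k * (if k = n - 1 then C else 0)
          = (if k = n - 1 then b k * C else 0) := fun k _ => by
        split <;> simp
      rw [Finset.sum_congr rfl this,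
        Finset.sum_ite_eq' (Finset.range n) (n - 1) (fun k => b k * C)]
      simp only [Finset.mem_range.2 hn1, if_true]
      ring
    rw [h1, Finset.mul_sum]
    congr 1
    · congr 1
      exact Finset.sum_congr rfl fun k _ => mul_comm _ _
    · exact Finset.sum_congr rfl fun k _ => mul_comm _ _
  rw [hL, hlogprod, ← hbn]
  linarith [hexp ▸ hnonneg]
end
end

section
/- Let μ be a finite Borel measure on S^{n-1}, let e_1,…,e_n be an orthonormal basis of R^n, and for small δ ∈ (0, 1/√n) define the partition Ω_{i,δ} = {u ∈ S^{n-1} : |u·e_i| ≥ δ and |u·e_j| < δ for all j < i}, i = 1,…,n. Then the sets Ω_{1,δ},…,Ω_{n,δ} are pairwise disjoint, cover S^{n-1}, and lim_{δ→0^+} μ(Ω_{i,δ}) = μ(S^{n-i} \ S^{n-i-1}) for each i, where S^{n-i} = S^{n-1} ∩ span{e_i,…,e_n} and S^{-1} = ∅. -/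
open Set MeasureTheory Metric Filter
open scoped RealInnerProductSpace Pointwise Topology

noncomputable section

/-- The partition sets `Ω_{i,δ} = {u ∈ S^{n-1} : |u·e_i| ≥ δ, |u·e_j| < δ for j < i}`. -/
def spherePart {n : ℕ} (b : OrthonormalBasis (Fin n) ℝ (Vn n)) (i : Fin n) (δ : ℝ) :
    Set (Vn n) :=
  {u ∈ sphere (0 : Vn n) 1 | δ ≤ |⟪u, b i⟫| ∧ ∀ j : Fin n, j < i → |⟪u, b j⟫| < δ}

/-- The subspheres `S^{n-i} = S^{n-1} ∩ span{e_i,…,e_n}` (with `S^{-1} = ∅`). -/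
def subSphere {n : ℕ} (b : OrthonormalBasis (Fin n) ℝ (Vn n)) (k : ℕ) : Set (Vn n) :=
  sphere (0 : Vn n) 1 ∩ (Submodule.span ℝ ((⇑b) '' {j : Fin n | k ≤ j.val}) : Set (Vn n))

/-- Auxiliary sets `B_{k,δ} = {u ∈ S : |⟪u, b j⟫| < δ for all j < k}`. -/
def Bset {n : ℕ} (b : OrthonormalBasis (Fin n) ℝ (Vn n)) (k : ℕ) (δ : ℝ) : Set (Vn n) :=
  sphere (0 : Vn n) 1 ∩ {u | ∀ j : Fin n, j.val < k → |⟪u, b j⟫| < δ}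

lemma Bset_measurable {n : ℕ} (b : OrthonormalBasis (Fin n) ℝ (Vn n)) (k : ℕ) (δ : ℝ) :
    MeasurableSet (Bset b k δ) := by
  apply (isClosed_sphere).measurableSet.inter
  have : {u : Vn n | ∀ j : Fin n, j.val < k → |⟪u, b j⟫| < δ} =
      ⋂ (j : Fin n) (_ : j.val < k), {u : Vn n | |⟪u, b j⟫| < δ} := by
    ext u; simp
  rw [this]
  refine MeasurableSet.iInter fun j => MeasurableSet.iInter fun _ => ?_
  exact (isOpen_lt ((continuous_id.inner continuous_const).abs) continuous_const).measurableSet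

lemma subSphere_eq {n : ℕ} (b : OrthonormalBasis (Fin n) ℝ (Vn n)) (k : ℕ) :
    subSphere b k = sphere (0 : Vn n) 1 ∩ {u | ∀ j : Fin n, j.val < k → ⟪u, b j⟫ = 0} := by
  unfold subSphere
  ext u
  simp only [mem_inter_iff, mem_setOf_eq, and_congr_right_iff, SetLike.mem_coe]
  intro _
  rw [← b.coe_toBasis, Module.Basis.mem_span_image]
  constructor
  · intro h j hj
    have hj' : j ∉ ((b.toBasis.repr u).support : Set (Fin n)) := by
      intro hmem
      have := h hmem
      simp only [mem_setOf_eq] at this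
      omega
    have h0 : b.repr u j = 0 := by
      by_contra hne
      apply hj'
      simp only [Finset.mem_coe, Finsupp.mem_support_iff, b.coe_toBasis_repr_apply]
      exact hne
    rw [b.repr_apply_apply] at h0
    rw [real_inner_comm]
    exact h0
  · intro h j hj
    simp only [Finset.mem_coe, Finsupp.mem_support_iff] at hj
    simp only [mem_setOf_eq]
    by_contra hjk
    push_neg at hjk
    apply hj
    rw [b.coe_toBasis_repr_apply, b.repr_apply_apply, ← real_inner_comm]
    exact h j hjk

lemma subSphere_measurable {n : ℕ} (b : OrthonormalBasis (Fin n) ℝ (Vn n)) (k : ℕ) :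
    MeasurableSet (subSphere b k) := by
  rw [subSphere_eq]
  apply (isClosed_sphere).measurableSet.inter
  have : {u : Vn n | ∀ j : Fin n, j.val < k → ⟪u, b j⟫ = 0} =
      ⋂ (j : Fin n) (_ : j.val < k), {u : Vn n | ⟪u, b j⟫ = 0} := by
    ext u; simp
  rw [this]
  refine MeasurableSet.iInter fun j => MeasurableSet.iInter fun _ => ?_
  exact (isClosed_eq (continuous_id.inner continuous_const) continuous_const).measurableSet

lemma Bset_mono {n : ℕ} (b : OrthonormalBasis (Fin n) ℝ (Vn n)) (k : ℕ) {δ δ' : ℝ}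
    (h : δ ≤ δ') : Bset b k δ ⊆ Bset b k δ' :=
  inter_subset_inter_right _ fun u hu j hj => lt_of_lt_of_le (hu j hj) h

lemma iInter_Bset {n : ℕ} (b : OrthonormalBasis (Fin n) ℝ (Vn n)) (k : ℕ) :
    ⋂ r > (0:ℝ), Bset b k r = subSphere b k := by
  rw [subSphere_eq]
  ext u
  simp only [mem_iInter, mem_inter_iff, mem_setOf_eq, Bset]
  constructor
  · intro h
    have h1 := (h 1 one_pos).1
    refine ⟨h1, fun j hj => ?_⟩
    by_contra h0
    have habs : 0 < |⟪u, b j⟫| := abs_pos.mpr h0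
    exact absurd ((h _ habs).2 j hj) (lt_irrefl _)
  · rintro ⟨h1, h2⟩ r hr
    exact ⟨h1, fun j hj => by rw [h2 j hj]; simpa using hr⟩

lemma tendsto_Bset {n : ℕ} (b : OrthonormalBasis (Fin n) ℝ (Vn n)) (k : ℕ)
    (μ : Measure (Vn n)) [IsFiniteMeasure μ] :
    Tendsto (fun δ => μ (Bset b k δ)) (nhdsWithin 0 (Set.Ioi 0)) (nhds (μ (subSphere b k))) := by
  have h := tendsto_measure_biInter_gt (μ := μ) (s := Bset b k) (a := (0:ℝ))
    (fun r _ => (Bset_measurable b k r).nullMeasurableSet)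
    (fun i j _ hij => Bset_mono b k hij)
    ⟨1, one_pos, measure_ne_top μ _⟩
  rw [iInter_Bset] at h
  exact h

lemma Bset_succ_subset {n : ℕ} (b : OrthonormalBasis (Fin n) ℝ (Vn n)) (k : ℕ) (δ : ℝ) :
    Bset b (k+1) δ ⊆ Bset b k δ :=
  inter_subset_inter_right _ fun u hu j hj => hu j (Nat.lt_succ_of_lt hj)

lemma spherePart_eq {n : ℕ} (b : OrthonormalBasis (Fin n) ℝ (Vn n)) (i : Fin n) (δ : ℝ) :
    spherePart b i δ = Bset b i.val δ \ Bset b (i.val + 1) δ := by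
  ext u
  simp only [spherePart, Bset, mem_sep_iff, mem_diff, mem_inter_iff, mem_setOf_eq]
  constructor
  · rintro ⟨hu, h1, h2⟩
    refine ⟨⟨hu, fun j hj => h2 j hj⟩, fun hc => ?_⟩
    exact absurd (hc.2 i (Nat.lt_succ_self _)) (not_lt.mpr h1)
  · rintro ⟨⟨hu, h1⟩, h2⟩
    refine ⟨hu, ?_, fun j hj => h1 j hj⟩
    by_contra h
    push_neg at h
    apply h2
    refine ⟨hu, fun j hj => ?_⟩
    rcases Nat.lt_succ_iff_lt_or_eq.mp hj with h' | h'
    · exact h1 j h'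
    · have hji : j = i := Fin.ext h'
      rw [hji]
      exact h

lemma subSphere_succ_subset {n : ℕ} (b : OrthonormalBasis (Fin n) ℝ (Vn n)) (k : ℕ) :
    subSphere b (k+1) ⊆ subSphere b k :=
  inter_subset_inter_right _
    (Submodule.span_mono (image_mono fun j hj => le_trans (Nat.le_succ k) hj))

/-- For a finite Borel measure `μ` on the sphere and `δ ∈ (0, 1/√n)`, the sets `Ω_{i,δ}` are
pairwise disjoint and cover `S^{n-1}`, and `μ(Ω_{i,δ}) → μ(S^{n-i} \ S^{n-i-1})` as `δ → 0⁺`. -/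
theorem stmt13 {n : ℕ} (μ : Measure (Vn n)) [IsFiniteMeasure μ]
    (b : OrthonormalBasis (Fin n) ℝ (Vn n)) :
    (∀ δ : ℝ, 0 < δ → δ < 1 / Real.sqrt n →
      ((Set.univ : Set (Fin n)).PairwiseDisjoint (fun i => spherePart b i δ) ∧
        ⋃ i, spherePart b i δ = sphere (0 : Vn n) 1)) ∧
    (∀ i : Fin n,
      Tendsto (fun δ => μ (spherePart b i δ)) (nhdsWithin 0 (Set.Ioi 0))
        (nhds (μ (subSphere b i.val \ subSphere b (i.val + 1))))) := by
  classical
  constructor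
  · intro δ hδ0 hδn
    constructor
    · have key : ∀ i j : Fin n, i < j → Disjoint (spherePart b i δ) (spherePart b j δ) := by
        intro i j hlt
        refine Set.disjoint_left.mpr fun u hui huj => ?_
        have h1 : δ ≤ |⟪u, b i⟫| := hui.2.1
        have h2 : |⟪u, b i⟫| < δ := huj.2.2 i hlt
        exact absurd (lt_of_le_of_lt h1 h2) (lt_irrefl _)
      intro i _ j _ hij
      rcases hij.lt_or_gt with hlt | hlt
      · exact key i j hlt
      · exact (key j i hlt).symm
    · ext u
      simp only [mem_iUnion]
      constructor
      · rintro ⟨i, hi⟩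
        exact hi.1
      · intro hu
        have hnorm : ‖u‖ = 1 := by simpa using mem_sphere_zero_iff_norm.mp hu
        have hsum : ∑ j, ⟪u, b j⟫ * ⟪b j, u⟫ = 1 := by
          rw [b.sum_inner_mul_inner u u, real_inner_self_eq_norm_sq, hnorm]
          norm_num
        have hex : ∃ j : Fin n, δ ≤ |⟪u, b j⟫| := by
          by_contra hcon
          push_neg at hcon
          have hle : (1:ℝ) ≤ (n:ℝ) * δ^2 := by
            have : ∑ j, ⟪u, b j⟫ * ⟪b j, u⟫ ≤ ∑ _j : Fin n, δ^2 := by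
              refine Finset.sum_le_sum fun j _ => ?_
              have hj := abs_lt.mp (hcon j)
              rw [real_inner_comm u (b j)]
              nlinarith [hj.1, hj.2, real_inner_comm u (b j)]
            rw [hsum] at this
            simpa using this
          have hs : 0 < Real.sqrt n := by
            rcases (Real.sqrt_nonneg n).eq_or_lt' with h' | h'
            · exfalso
              have hz : 1 / Real.sqrt n = 0 := by rw [h', div_zero]
              linarith
            · exact h'
          have hsn : Real.sqrt n * Real.sqrt n = (n:ℝ) := Real.mul_self_sqrt (Nat.cast_nonneg n)
          have hδs : δ * Real.sqrt n < 1 := by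
            have := (lt_div_iff₀ hs).mp hδn
            linarith
          nlinarith [mul_pos hδ0 hs]
        let T : Finset (Fin n) := Finset.univ.filter (fun j => δ ≤ |⟪u, b j⟫|)
        obtain ⟨j0, hj0⟩ := hex
        have hT : T.Nonempty := ⟨j0, Finset.mem_filter.mpr ⟨Finset.mem_univ _, hj0⟩⟩
        have hmin := T.min'_mem hT
        rw [Finset.mem_filter] at hmin
        refine ⟨T.min' hT, hu, hmin.2, fun j hj => ?_⟩
        by_contra h
        push_neg at h
        have : T.min' hT ≤ j := T.min'_le j (Finset.mem_filter.mpr ⟨Finset.mem_univ _, h⟩)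
        exact absurd (lt_of_lt_of_le hj this) (lt_irrefl _)
  · intro i
    have hB := tendsto_Bset b i.val μ
    have hC := tendsto_Bset b (i.val + 1) μ
    have hsub := ENNReal.Tendsto.sub hB hC (Or.inl (measure_ne_top μ _))
    have e2 : μ (subSphere b i.val \ subSphere b (i.val + 1)) =
        μ (subSphere b i.val) - μ (subSphere b (i.val + 1)) :=
      measure_diff (subSphere_succ_subset b i.val)
        ((subSphere_measurable b _).nullMeasurableSet) (measure_ne_top μ _)
    rw [e2]
    refine hsub.congr fun δ => ?_
    rw [spherePart_eq, measure_diff (Bset_succ_subset b i.val δ)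
      ((Bset_measurable b _ _).nullMeasurableSet) (measure_ne_top μ _)]
end
end

section
/- Let μ be a finite Borel measure on S^{n-1}, let a_{1},…,a_{n} > 0, let f_1,…,f_n be an orthonormal basis and e_1,…,e_n another orthonormal basis with |f_i − e_i| < δ/2 for all i, where δ ∈ (0,1/√n). Then (1/|μ|) ∫_{S^{n-1}} log(Σ_{i=1}^n |u·f_i|/a_i) dμ(u) ≥ log(δ/2) − Σ_{i=1}^n (μ(Ω_{i,δ})/|μ|) log a_i, where Ω_{i,δ} = {u : |u·e_i| ≥ δ, |u·e_j| < δ for j < i}. -/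
open Set MeasureTheory Metric Filter
open scoped RealInnerProductSpace Pointwise Topology

noncomputable section

/-- Entropy-type integral estimate: if `μ` is a finite Borel measure on `S^{n-1}` with
`|μ| > 0`, `a_i > 0`, and `f`, `e` are orthonormal bases with `|f_i − e_i| < δ/2` for some
`δ ∈ (0, 1/√n)`, then
`(1/|μ|)∫ log(Σ |u·f_i|/a_i) dμ ≥ log(δ/2) − Σ (μ(Ω_{i,δ})/|μ|) log a_i`. -/
theorem stmt14 {n : ℕ} (μ : Measure (Vn n)) [IsFiniteMeasure μ]
    (hμ : 0 < (μ (sphere (0 : Vn n) 1)).toReal)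
    (a : Fin n → ℝ) (ha : ∀ i, 0 < a i)
    (f e : OrthonormalBasis (Fin n) ℝ (Vn n)) (δ : ℝ) (hδ0 : 0 < δ)
    (hδn : δ < 1 / Real.sqrt n) (hfe : ∀ i, ‖f i - e i‖ < δ / 2) :
    (1 / (μ (sphere (0 : Vn n) 1)).toReal) *
        ∫ u in sphere (0 : Vn n) 1, Real.log (∑ i, |⟪u, f i⟫| / a i) ∂ μ ≥
      Real.log (δ / 2) -
        ∑ i, ((μ (spherePart e i δ)).toReal / (μ (sphere (0 : Vn n) 1)).toReal) *
          Real.log (a i) := by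
  classical
  set S := sphere (0 : Vn n) 1 with hSdef
  set m := (μ S).toReal with hmdef
  set g : Vn n → ℝ := fun u => Real.log (∑ i, |⟪u, f i⟫| / a i) with hgdef
  have hm0 : m ≠ 0 := ne_of_gt hμ
  have hSmeas : MeasurableSet S := isClosed_sphere.measurableSet
  -- continuity of inner products
  have hic : ∀ v : Vn n, Continuous fun u : Vn n => ⟪u, v⟫ :=
    fun v => Continuous.inner continuous_id continuous_const
  -- measurability of the parts
  have hAmeas : ∀ i, MeasurableSet (spherePart e i δ) := by
    intro i
    have : spherePart e i δ =
        (S ∩ {u | δ ≤ |⟪u, e i⟫|}) ∩ ⋂ j ∈ {j : Fin n | j < i}, {u | |⟪u, e j⟫| < δ} := by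
      ext u
      simp only [spherePart, Set.mem_sep_iff, Set.mem_inter_iff, Set.mem_iInter,
        Set.mem_setOf_eq, hSdef]
      tauto
    rw [this]
    refine ((hSmeas.inter ?_).inter ?_)
    · exact measurableSet_le measurable_const (hic (e i)).abs.measurable
    · exact MeasurableSet.biInter (Set.to_countable _)
        (fun j _ => measurableSet_lt (hic (e j)).abs.measurable measurable_const)
  -- every u in the sphere has some large coordinate
  have hcover : ∀ u ∈ S, ∃ i, δ ≤ |⟪u, e i⟫| := by
    intro u hu
    by_contra h
    push_neg at h
    have hnorm : ‖u‖ = 1 := by simpa [hSdef] using hu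
    have h1 : ∑ i, ⟪u, e i⟫ ^ 2 = 1 := by
      have := e.sum_inner_mul_inner u u
      have h2 : ⟪u, u⟫ = 1 := by
        rw [real_inner_self_eq_norm_sq, hnorm]; norm_num
      calc ∑ i, ⟪u, e i⟫ ^ 2 = ∑ i, ⟪u, e i⟫ * ⟪e i, u⟫ := by
            refine Finset.sum_congr rfl fun i _ => ?_
            rw [sq, real_inner_comm u (e i)]
        _ = 1 := by rw [this, h2]
    have h2 : (1 : ℝ) ≤ n * δ ^ 2 := by
      calc (1:ℝ) = ∑ i, ⟪u, e i⟫ ^ 2 := h1.symm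
        _ ≤ ∑ _i : Fin n, δ ^ 2 := by
            refine Finset.sum_le_sum fun i _ => ?_
            have := h i
            nlinarith [abs_nonneg ⟪u, e i⟫, sq_abs ⟪u, e i⟫]
        _ = n * δ ^ 2 := by simp [Finset.sum_const, mul_comm]
    have hn0 : (0:ℝ) < n := by
      rcases (Nat.cast_nonneg n : (0:ℝ) ≤ n).lt_or_eq with h' | h'
      · exact h'
      · rw [← h'] at h2; nlinarith
    have hs : (0:ℝ) < Real.sqrt n := Real.sqrt_pos.mpr hn0
    have hd : δ * Real.sqrt n < 1 := (lt_div_iff₀ hs).mp hδn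
    have hd2 : (δ * Real.sqrt n) ^ 2 < 1 := by nlinarith [mul_pos hδ0 hs]
    have hd3 : (n:ℝ) * δ ^ 2 < 1 := by nlinarith [Real.sq_sqrt hn0.le]
    linarith
  -- membership in some part
  have hmem : ∀ u ∈ S, ∃ i, u ∈ spherePart e i δ := by
    intro u hu
    have hne : (Finset.univ.filter fun i : Fin n => δ ≤ |⟪u, e i⟫|).Nonempty := by
      obtain ⟨i, hi⟩ := hcover u hu
      exact ⟨i, Finset.mem_filter.mpr ⟨Finset.mem_univ i, hi⟩⟩
    set i0 := (Finset.univ.filter fun i : Fin n => δ ≤ |⟪u, e i⟫|).min' hne with hi0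
    refine ⟨i0, hu, ?_, ?_⟩
    · exact (Finset.mem_filter.mp
        ((Finset.univ.filter fun i : Fin n => δ ≤ |⟪u, e i⟫|).min'_mem hne)).2
    · intro j hj
      by_contra hge
      push_neg at hge
      have : i0 ≤ j := Finset.min'_le _ j (Finset.mem_filter.mpr ⟨Finset.mem_univ j, hge⟩)
      exact absurd hj (not_lt.mpr this)
  -- parts are contained in S
  have hsub : ∀ i, spherePart e i δ ⊆ S := fun i u hu => hu.1
  -- disjointness
  have hdisj : Pairwise (Function.onFun Disjoint fun i => spherePart e i δ) := by
    intro i j hij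
    wlog hlt : i < j generalizing i j
    · exact (this hij.symm (hij.lt_or_gt.resolve_left hlt)).symm
    refine Set.disjoint_left.mpr fun u hi hj => ?_
    exact absurd hi.2.1 (not_le.mpr (hj.2.2 i hlt))
  -- union is S
  have hUnion : S = ⋃ i, spherePart e i δ := by
    apply Set.Subset.antisymm
    · intro u hu
      obtain ⟨i, hi⟩ := hmem u hu
      exact Set.mem_iUnion.mpr ⟨i, hi⟩
    · exact Set.iUnion_subset hsub
  -- sum of measures
  have hmsum : ∑ i, (μ (spherePart e i δ)).toReal = m := by
    rw [hmdef, hUnion, measure_iUnion hdisj hAmeas, tsum_fintype,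
      ENNReal.toReal_sum (fun i _ => (measure_ne_top μ _))]
  -- sphere nonempty, hence n ≥ 1
  have hSne : S.Nonempty := by
    rw [Set.nonempty_iff_ne_empty]
    intro h
    rw [hmdef, h] at hμ
    simp at hμ
  have hNE : Nonempty (Fin n) := by
    obtain ⟨u, hu⟩ := hSne
    exact ⟨(hcover u hu).choose⟩
  have hasum : 0 < ∑ j, a j := Finset.sum_pos (fun i _ => ha i) Finset.univ_nonempty
  set c : ℝ := (δ / 2) / (∑ j, a j) with hcdef
  have hc0 : 0 < c := by positivity
  set C : ℝ := ∑ j, 1 / a j with hCdef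
  -- pointwise bound on each part
  have hpart : ∀ i, ∀ u ∈ spherePart e i δ, (δ / 2) / a i ≤ ∑ j, |⟪u, f j⟫| / a j := by
    intro i u hu
    have hnorm : ‖u‖ = 1 := by simpa [hSdef] using hu.1
    have h1 : |⟪u, f i - e i⟫| ≤ ‖f i - e i‖ := by
      calc |⟪u, f i - e i⟫| ≤ ‖u‖ * ‖f i - e i‖ := abs_real_inner_le_norm _ _
        _ = ‖f i - e i‖ := by rw [hnorm, one_mul]
    have h2 : δ / 2 ≤ |⟪u, f i⟫| := by
      have h3 : ⟪u, f i⟫ = ⟪u, e i⟫ + ⟪u, f i - e i⟫ := by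
        rw [inner_sub_right]; ring
      have := hu.2.1
      have := hfe i
      have habs : |⟪u, e i⟫| ≤ |⟪u, f i⟫| + |⟪u, f i - e i⟫| := by
        have h4 : ⟪u, e i⟫ = ⟪u, f i⟫ + -⟪u, f i - e i⟫ := by
          rw [inner_sub_right]; ring
        rw [h4]
        calc |⟪u, f i⟫ + -⟪u, f i - e i⟫| ≤ |⟪u, f i⟫| + |-⟪u, f i - e i⟫| := abs_add_le _ _
          _ = |⟪u, f i⟫| + |⟪u, f i - e i⟫| := by rw [abs_neg]
      linarith
    calc (δ / 2) / a i ≤ |⟪u, f i⟫| / a i := by gcongr; exact (ha i).le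
        _ ≤ ∑ j, |⟪u, f j⟫| / a j := Finset.single_le_sum
            (f := fun j => |⟪u, f j⟫| / a j) (fun j _ => div_nonneg (abs_nonneg _) (ha j).le) (Finset.mem_univ i)
  -- upper bound on the sphere
  have hub : ∀ u ∈ S, ∑ j, |⟪u, f j⟫| / a j ≤ C := by
    intro u hu
    have hnorm : ‖u‖ = 1 := by simpa [hSdef] using hu
    refine Finset.sum_le_sum fun j _ => ?_
    have h1 : |⟪u, f j⟫| ≤ 1 := by
      have h2 := abs_real_inner_le_norm u (f j)
      rw [hnorm, f.orthonormal.1 j, one_mul] at h2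
      exact h2
    rw [div_le_div_iff₀ (ha j) (ha j)]
    nlinarith [ha j]
  -- lower bound on the sphere
  have hlb : ∀ u ∈ S, c ≤ ∑ j, |⟪u, f j⟫| / a j := by
    intro u hu
    obtain ⟨i, hi⟩ := hmem u hu
    refine le_trans ?_ (hpart i u hi)
    exact div_le_div_of_nonneg_left (by linarith) (ha i)
      (Finset.single_le_sum (fun j _ => (ha j).le) (Finset.mem_univ i))
  -- integrability
  have hcont : Continuous fun u : Vn n => ∑ j, |⟪u, f j⟫| / a j :=
    continuous_finset_sum _ fun j _ => ((hic (f j)).abs.div_const (a j))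
  have hgmeas : Measurable g := Real.measurable_log.comp hcont.measurable
  have hInt : IntegrableOn g S μ := by
    have hbd : ∀ u ∈ S, ‖g u‖ ≤ max |Real.log c| |Real.log C| := by
      intro u hu
      have h1 : Real.log c ≤ g u := Real.log_le_log hc0 (hlb u hu)
      have h2 : g u ≤ Real.log C := Real.log_le_log (lt_of_lt_of_le hc0 (hlb u hu)) (hub u hu)
      rw [Real.norm_eq_abs, abs_le]
      constructor
      · calc -(max |Real.log c| |Real.log C|) ≤ -|Real.log c| :=
              neg_le_neg (le_max_left _ _)
          _ ≤ Real.log c := neg_abs_le _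
          _ ≤ g u := h1
      · exact h2.trans ((le_abs_self _).trans (le_max_right _ _))
    refine ⟨hgmeas.aestronglyMeasurable, ?_⟩
    apply HasFiniteIntegral.of_bounded (C := max |Real.log c| |Real.log C|)
    exact ae_restrict_of_forall_mem hSmeas hbd
  have hIntA : ∀ i, IntegrableOn g (spherePart e i δ) μ := fun i => hInt.mono_set (hsub i)
  have hsplit : ∫ u in S, g u ∂μ = ∑ i, ∫ u in spherePart e i δ, g u ∂μ := by
    rw [hUnion]
    exact integral_iUnion_fintype hAmeas hdisj hIntA
  have hkey : ∀ i, (Real.log (δ/2) - Real.log (a i)) * (μ (spherePart e i δ)).toReal ≤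
      ∫ u in spherePart e i δ, g u ∂μ := by
    intro i
    have h1 : ∀ u ∈ spherePart e i δ, Real.log (δ/2) - Real.log (a i) ≤ g u := by
      intro u hu
      have h2 := hpart i u hu
      have h3 : Real.log ((δ/2)/a i) ≤ g u :=
        Real.log_le_log (div_pos (by linarith) (ha i)) h2
      rwa [Real.log_div (by linarith) (ne_of_gt (ha i))] at h3
    have := setIntegral_ge_of_const_le (hAmeas i) (measure_ne_top μ _) h1 (hIntA i)
    rwa [smul_eq_mul, measureReal_def, mul_comm] at this
  have hsumle : ∑ i, (Real.log (δ/2) - Real.log (a i)) * (μ (spherePart e i δ)).toReal ≤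
      ∫ u in S, g u ∂μ := by
    rw [hsplit]; exact Finset.sum_le_sum fun i _ => hkey i
  have expand : (1/m) * ∑ i, (Real.log (δ/2) - Real.log (a i)) * (μ (spherePart e i δ)).toReal
      = Real.log (δ/2) - ∑ i, ((μ (spherePart e i δ)).toReal / m) * Real.log (a i) := by
    rw [Finset.mul_sum]
    have h1 : ∀ i ∈ Finset.univ, (1/m) *
        ((Real.log (δ/2) - Real.log (a i)) * (μ (spherePart e i δ)).toReal)
        = Real.log (δ/2) * ((μ (spherePart e i δ)).toReal / m) -
          ((μ (spherePart e i δ)).toReal / m) * Real.log (a i) := by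
      intro i _; field_simp
    rw [Finset.sum_congr rfl h1, Finset.sum_sub_distrib, ← Finset.mul_sum, ← Finset.sum_div,
      hmsum, div_self hm0, mul_one]
  rw [ge_iff_le, ← expand]
  exact mul_le_mul_of_nonneg_left hsumle (one_div_nonneg.mpr hμ.le)
end
end

section
/- Let q ∈ (0,1), 1 ≤ k < n, let e_1,…,e_n be an orthonormal basis of R^n and ε_0 > 0. Then there exists a constant c depending only on q, k, n, ε_0 such that for all a_1,…,a_n > 0 with a_{k+1},…,a_n > ε_0, one has (1/q) log ∫_{S^{n-1}} (Σ_{i=1}^n a_i |u·e_i|)^{-q} du ≤ c. -/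
open Set MeasureTheory Metric Filter
open scoped RealInnerProductSpace Pointwise Topology

noncomputable section

open scoped ENNReal NNReal

set_option maxHeartbeats 1000000

namespace Stmt15Aux

variable {m : ℕ}

/-- Graph map over the hyperplane of coordinates other than `l`. -/
def G (l : Fin (m+1)) (σ : ℝ) (x : Fin m → ℝ) : EuclideanSpace ℝ (Fin (m+1)) :=
  (WithLp.equiv 2 (Fin (m+1) → ℝ)).symm (l.insertNth (σ * Real.sqrt (1 - ∑ t, x t ^ 2)) x)

def Dom (m : ℕ) : Set (Fin m → ℝ) := {x | ∑ t, x t ^ 2 ≤ 1 - 1 / (4 * (m+1))}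

lemma G_apply_same (l : Fin (m+1)) (σ : ℝ) (x : Fin m → ℝ) :
    G l σ x l = σ * Real.sqrt (1 - ∑ t, x t ^ 2) := by
  simp [G]

lemma G_apply_succAbove (l : Fin (m+1)) (σ : ℝ) (x : Fin m → ℝ) (t : Fin m) :
    G l σ x (l.succAbove t) = x t := by
  simp [G]

lemma coord_sq_le {x : Fin m → ℝ} (hx : x ∈ Dom m) (t : Fin m) : |x t| ≤ 1 := by
  have h1 : x t ^ 2 ≤ ∑ s, x s ^ 2 :=
    Finset.single_le_sum (fun s _ => sq_nonneg (x s)) (Finset.mem_univ t)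
  have h2 : (0:ℝ) < 1 / (4 * (m+1)) := by positivity
  have := hx
  simp only [Dom, Set.mem_setOf_eq] at this
  have : x t ^ 2 ≤ 1 := by linarith
  nlinarith [abs_nonneg (x t), sq_abs (x t)]


lemma lipschitz_G (l : Fin (m+1)) (σ : ℝ) (hσ : |σ| = 1) :
    LipschitzOnWith (4*(m+1)^2 : ℝ≥0) (G l σ) (Dom m) := by
  apply LipschitzOnWith.of_dist_le_mul
  intro x hx y hy
  set d := dist x y with hd
  have hd0 : 0 ≤ d := dist_nonneg
  have hcoord : ∀ t, |x t - y t| ≤ d := fun t => by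
    rw [← Real.dist_eq]; exact dist_le_pi_dist x y t
  set A := 1 - ∑ t, x t ^ 2 with hA
  set B := 1 - ∑ t, y t ^ 2 with hB
  have hτ : (0:ℝ) < 1/(4*((m:ℝ)+1)) := by positivity
  have hxd := hx; have hyd := hy
  simp only [Dom, Set.mem_setOf_eq] at hxd hyd
  have hAτ : 1/(4*((m:ℝ)+1)) ≤ A := by rw [hA]; linarith
  have hBτ : 1/(4*((m:ℝ)+1)) ≤ B := by rw [hB]; linarith
  have hA0 : 0 ≤ A := le_trans hτ.le hAτ
  have hB0 : 0 ≤ B := le_trans hτ.le hBτ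
  -- |A - B| ≤ 2 m d
  have hAB : |A - B| ≤ 2 * m * d := by
    have h1 : A - B = ∑ t, (y t ^ 2 - x t ^ 2) := by
      rw [hA, hB, Finset.sum_sub_distrib]; ring
    calc |A - B| = |∑ t, (y t ^ 2 - x t ^ 2)| := by rw [h1]
      _ ≤ ∑ t, |y t ^ 2 - x t ^ 2| := Finset.abs_sum_le_sum_abs _ _
      _ ≤ ∑ _t : Fin m, 2 * d := by
          apply Finset.sum_le_sum
          intro t _
          have e1 : y t ^ 2 - x t ^ 2 = (y t - x t) * (y t + x t) := by ring
          rw [e1, abs_mul]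
          have h2 : |y t - x t| ≤ d := by rw [abs_sub_comm]; exact hcoord t
          have h3 : |y t + x t| ≤ 2 := by
            have := coord_sq_le hx t; have := coord_sq_le hy t
            have := abs_add_le (y t) (x t); linarith
          calc |y t - x t| * |y t + x t| ≤ d * 2 :=
                mul_le_mul h2 h3 (abs_nonneg _) hd0
            _ = 2 * d := by ring
      _ = 2 * m * d := by rw [Finset.sum_const]; simp [Finset.card_univ]; ring
  set st := Real.sqrt (1/(4*((m:ℝ)+1))) with hst
  have hst0 : 0 < st := Real.sqrt_pos.2 hτ
  set R := Real.sqrt (4*((m:ℝ)+1)) with hR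
  have hR0 : 0 < R := Real.sqrt_pos.2 (by positivity)
  have hstR : st * R = 1 := by
    rw [hst, hR, ← Real.sqrt_mul hτ.le]
    rw [show 1/(4*((m:ℝ)+1)) * (4*((m:ℝ)+1)) = 1 by field_simp]
    exact Real.sqrt_one
  have hR2 : R ^ 2 = 4*((m:ℝ)+1) := Real.sq_sqrt (by positivity)
  -- |√A - √B| ≤ m * d * R
  have hkey : |Real.sqrt A - Real.sqrt B| * (Real.sqrt A + Real.sqrt B) = |A - B| := by
    rw [← abs_of_nonneg (by positivity : 0 ≤ Real.sqrt A + Real.sqrt B), ← abs_mul]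
    congr 1
    nlinarith [Real.sq_sqrt hA0, Real.sq_sqrt hB0]
  have hsumsqrt : 2 * st ≤ Real.sqrt A + Real.sqrt B := by
    have := Real.sqrt_le_sqrt hAτ; have := Real.sqrt_le_sqrt hBτ
    rw [hst]; linarith
  have hΔ : |Real.sqrt A - Real.sqrt B| ≤ m * d * R := by
    have h4 : |Real.sqrt A - Real.sqrt B| * (2 * st) ≤ |A - B| := by
      calc |Real.sqrt A - Real.sqrt B| * (2 * st)
          ≤ |Real.sqrt A - Real.sqrt B| * (Real.sqrt A + Real.sqrt B) :=
            mul_le_mul_of_nonneg_left hsumsqrt (abs_nonneg _)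
        _ = |A - B| := hkey
    nlinarith [abs_nonneg (Real.sqrt A - Real.sqrt B), mul_le_mul_of_nonneg_right h4 hR0.le,
      mul_le_mul_of_nonneg_right hAB hR0.le]
  -- assemble
  have hGd : dist (G l σ x) (G l σ y) ^ 2 ≤ ((4*((m:ℝ)+1)^2) * d) ^ 2 := by
    rw [EuclideanSpace.dist_eq]
    rw [Real.sq_sqrt (by positivity)]
    have hsplit : ∑ i, dist (G l σ x i) (G l σ y i) ^ 2
        = dist (G l σ x l) (G l σ y l) ^ 2
          + ∑ t, dist (G l σ x (l.succAbove t)) (G l σ y (l.succAbove t)) ^ 2 :=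
      Fin.sum_univ_succAbove (fun i => dist (G l σ x i) (G l σ y i) ^ 2) l
    rw [hsplit]
    have h5 : dist (G l σ x l) (G l σ y l) = |Real.sqrt A - Real.sqrt B| := by
      rw [G_apply_same, G_apply_same, Real.dist_eq, ← hA, ← hB, ← mul_sub, abs_mul, hσ, one_mul]
    have h6 : ∑ t, dist (G l σ x (l.succAbove t)) (G l σ y (l.succAbove t)) ^ 2
        ≤ ∑ _t : Fin m, d ^ 2 := by
      apply Finset.sum_le_sum
      intro t _
      have : dist (G l σ x (l.succAbove t)) (G l σ y (l.succAbove t)) = |x t - y t| := by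
        rw [G_apply_succAbove, G_apply_succAbove, Real.dist_eq]
      rw [this]
      have := hcoord t
      nlinarith [abs_nonneg (x t - y t)]
    have h7 : (∑ _t : Fin m, d ^ 2 : ℝ) = m * d ^ 2 := by
      rw [Finset.sum_const]; simp [Finset.card_univ]
    rw [h5]
    have h8 : |Real.sqrt A - Real.sqrt B| ^ 2 ≤ (m * d * R) ^ 2 := by
      nlinarith [abs_nonneg (Real.sqrt A - Real.sqrt B)]
    have h9 : ((m:ℝ) * d * R) ^ 2 = (m:ℝ)^2 * d^2 * (4*((m:ℝ)+1)) := by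
      rw [mul_pow, mul_pow, hR2]
    nlinarith [sq_nonneg d, Nat.cast_nonneg (α := ℝ) m]
  have hfinal : dist (G l σ x) (G l σ y) ≤ (4*((m:ℝ)+1)^2) * d := by
    have h10 := Real.sqrt_le_sqrt hGd
    rwa [Real.sqrt_sq dist_nonneg, Real.sqrt_sq (by positivity)] at h10
  calc dist (G l σ x) (G l σ y) ≤ (4*((m:ℝ)+1)^2) * d := hfinal
    _ = ((4*(m+1)^2 : ℝ≥0) : ℝ) * d := by push_cast; ring


lemma ofReal_prod_aux {ι : Type*} (s : Finset ι) (f : ι → ℝ) (hf : ∀ i ∈ s, 0 ≤ f i) :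
    ∏ i ∈ s, ENNReal.ofReal (f i) = ENNReal.ofReal (∏ i ∈ s, f i) := by
  classical
  induction s using Finset.induction with
  | empty => simp
  | @insert a s' hnot ih =>
    rw [Finset.prod_insert hnot, Finset.prod_insert hnot,
      ih (fun i hi => hf i (Finset.mem_insert_of_mem hi)),
      ← ENNReal.ofReal_mul (hf a (Finset.mem_insert_self a s'))]

/-- measure of a graph piece over a box. -/
lemma piece_bound (hm : 1 ≤ m) (l : Fin (m+1)) (σ : ℝ) (hσ : |σ| = 1)
    (T : Set (Fin m → ℝ)) (hT : T ⊆ Dom m) (c : Fin m → ℝ) (hc : ∀ t, 0 ≤ c t)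
    (hbox : T ⊆ Set.pi Set.univ fun t => Set.Icc (-(c t)) (c t)) :
    μH[(m:ℝ)] (G l σ '' T) ≤
      ENNReal.ofReal ((4*((m:ℝ)+1)^2) ^ m * ∏ t, (2 * c t)) := by
  have h1 : μH[(m:ℝ)] (G l σ '' T) ≤ ((4*(m+1)^2 : ℝ≥0) : ℝ≥0∞) ^ ((m:ℕ):ℝ) * μH[(m:ℝ)] T :=
    ((lipschitz_G l σ hσ).mono hT).hausdorffMeasure_image_le (by positivity)
  have h2 : (μH[(m:ℝ)] : Measure (Fin m → ℝ)) = volume := by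
    have := hausdorffMeasure_pi_real (ι := Fin m)
    simpa using this
  have h3 : μH[(m:ℝ)] T ≤ ENNReal.ofReal (∏ t, (2 * c t)) := by
    rw [h2]
    calc volume T ≤ volume (Set.pi Set.univ fun t => Set.Icc (-(c t)) (c t)) :=
          measure_mono hbox
      _ = ∏ t, volume (Set.Icc (-(c t)) (c t)) := volume_pi_pi _
      _ = ∏ t, ENNReal.ofReal (2 * c t) := by
          refine Finset.prod_congr rfl fun t _ => ?_
          rw [Real.volume_Icc]; congr 1; ring
      _ = ENNReal.ofReal (∏ t, (2 * c t)) :=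
          ofReal_prod_aux _ _ (fun t _ => mul_nonneg (by norm_num) (hc t))
  calc μH[(m:ℝ)] (G l σ '' T) ≤ ((4*(m+1)^2 : ℝ≥0) : ℝ≥0∞) ^ ((m:ℕ):ℝ) * μH[(m:ℝ)] T := h1
    _ ≤ ((4*(m+1)^2 : ℝ≥0) : ℝ≥0∞) ^ ((m:ℕ):ℝ) * ENNReal.ofReal (∏ t, (2 * c t)) := by
        exact mul_le_mul_right h3 _
    _ = ENNReal.ofReal ((4*((m:ℝ)+1)^2) ^ m * ∏ t, (2 * c t)) := by
        rw [ENNReal.rpow_natCast,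
          ENNReal.ofReal_mul (by positivity : (0:ℝ) ≤ (4*((m:ℝ)+1)^2) ^ m)]
        congr 1
        have hcoe : ((4*(m+1)^2 : ℝ≥0) : ℝ) = 4*((m:ℝ)+1)^2 := by push_cast; ring
        rw [← hcoe, ← NNReal.coe_pow, ENNReal.ofReal_coe_nnreal, ENNReal.coe_pow]


/-- Main geometric estimate: the measure of a band around a coordinate hyperplane
on the unit sphere is linear in its width. -/
theorem band_bound (m : ℕ) (hm : 1 ≤ m) (j : Fin (m+1)) :
    ∃ C : ℝ, 0 < C ∧ ∀ s : ℝ, 0 < s → s ≤ 1 →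
      μH[(m:ℝ)] {u : EuclideanSpace ℝ (Fin (m+1)) | ‖u‖ = 1 ∧ |u j| ≤ s}
        ≤ ENNReal.ofReal (C * s) := by
  classical
  set κ : ℝ := (4*((m:ℝ)+1)^2) ^ m * 2 ^ (m+1) with hκ
  have hκ0 : 0 < κ := by positivity
  refine ⟨((m:ℝ)+1) * 2 * κ, by positivity, ?_⟩
  intro s hs0 hs1
  set T : Fin (m+1) → Set (Fin m → ℝ) :=
    fun l => Dom m ∩ {x | ∀ p, l.succAbove p = j → |x p| ≤ s} with hT
  -- bound for each piece
  have hpiece : ∀ l : Fin (m+1), ∀ σ : ℝ, |σ| = 1 → (l ≠ j ∨ 1/2 < s) →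
      μH[(m:ℝ)] (G l σ '' T l) ≤ ENNReal.ofReal (κ * s) := by
    intro l σ hσ hl
    by_cases hlj : l = j
    · -- whole-box case, only when s > 1/2
      have hs2 : 1/2 < s := hl.resolve_left (by simp [hlj])
      have h := piece_bound hm l σ hσ (T l) Set.inter_subset_left (fun _ => 1)
        (fun _ => zero_le_one) ?_
      · refine le_trans h (ENNReal.ofReal_le_ofReal ?_)
        have : (∏ _t : Fin m, (2 * (1:ℝ))) = 2 ^ m := by
          rw [Finset.prod_const]; simp [Finset.card_univ]
        rw [this, hκ]
        have h2 : (2:ℝ)^(m+1) * s ≥ 2^m := by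
          rw [pow_succ]
          nlinarith [pow_pos (by norm_num : (0:ℝ) < 2) m]
        nlinarith [pow_pos (by positivity : (0:ℝ) < 4*((m:ℝ)+1)^2) m]
      · intro x hx
        intro t _
        have h1 := coord_sq_le hx.1 t
        simp only [Set.mem_Icc]
        exact abs_le.1 h1
    · -- thin-box case
      obtain ⟨p, hp⟩ := Fin.exists_succAbove_eq (Ne.symm hlj : j ≠ l)
      have h := piece_bound hm l σ hσ (T l) Set.inter_subset_left
        (fun t => if t = p then s else 1)
        (fun t => by by_cases h : t = p <;> simp [h, hs0.le]) ?_
      · refine le_trans h (ENNReal.ofReal_le_ofReal ?_)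
        have hprod : (∏ t : Fin m, (2 * if t = p then s else 1)) = 2 ^ m * s := by
          rw [show (fun t : Fin m => (2 * if t = p then s else 1))
              = fun t : Fin m => (2 * if t = p then s else 1) from rfl]
          rw [Finset.prod_mul_distrib, Finset.prod_const]
          simp [Finset.card_univ, Finset.prod_ite_eq']
        rw [hprod, hκ]
        have : (2:ℝ)^(m+1) = 2 * 2^m := by rw [pow_succ]; ring
        rw [this]
        have hP : (0:ℝ) ≤ (4*((m:ℝ)+1)^2)^m * (2^m*s) := by positivity
        nlinarith [hP]
      · intro x hx t _
        simp only [Set.mem_Icc]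
        by_cases h : t = p
        · subst h
          have h2 := hx.2 t hp
          simp only [if_pos rfl]
          exact abs_le.1 h2
        · have h2 := coord_sq_le hx.1 t
          simp only [if_neg h]
          exact abs_le.1 h2
  -- covering
  have hcover : {u : EuclideanSpace ℝ (Fin (m+1)) | ‖u‖ = 1 ∧ |u j| ≤ s} ⊆
      ⋃ l : Fin (m+1), (if (l ≠ j ∨ 1/2 < s) then (G l 1 '' T l ∪ G l (-1) '' T l) else ∅) := by
    intro u hu
    obtain ⟨hnorm, huj⟩ := hu
    have hsum : ∑ i, u i ^ 2 = 1 := by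
      have h1 := EuclideanSpace.norm_eq u
      rw [hnorm] at h1
      have h2 : ∑ i, ‖u i‖ ^ 2 = 1 := Real.sqrt_eq_one.1 h1.symm
      simpa [Real.norm_eq_abs, sq_abs] using h2
    -- find a good coordinate l
    have hgood : ∃ l : Fin (m+1), (l ≠ j ∨ 1/2 < s) ∧ 1/(4*((m:ℝ)+1)) ≤ u l ^ 2 := by
      by_contra hcon
      push_neg at hcon
      by_cases hs2 : s ≤ 1/2
      · have hjs : u j ^ 2 ≤ 1/4 := by
          have h2 : |u j| ≤ 1/2 := le_trans huj hs2
          have h3 : |u j| * |u j| ≤ (1/2) * (1/2) :=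
            mul_self_le_mul_self (abs_nonneg _) h2
          nlinarith [sq_abs (u j)]
        have hrest : ∑ i ∈ Finset.univ.erase j, u i ^ 2 = 1 - u j ^ 2 := by
          have h4 : u j ^ 2 + ∑ x ∈ Finset.univ.erase j, u x ^ 2 = 1 := by
            simpa using
              (Finset.add_sum_erase Finset.univ (fun i => u i ^ 2) (Finset.mem_univ j)).trans hsum
          linarith
        have hle : ∑ i ∈ Finset.univ.erase j, u i ^ 2
            ≤ (Finset.univ.erase j).card • (1/(4*((m:ℝ)+1))) := by
          apply Finset.sum_le_card_nsmul
          intro l hl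
          exact (hcon l (Or.inl (Finset.ne_of_mem_erase hl))).le
        have hcard : (Finset.univ.erase j).card = m := by
          rw [Finset.card_erase_of_mem (Finset.mem_univ j), Finset.card_univ, Fintype.card_fin]
          omega
        rw [hcard, nsmul_eq_mul] at hle
        have hmle : (m:ℝ) * (1/(4*((m:ℝ)+1))) ≤ 1/4 := by
          rw [mul_one_div, div_le_div_iff₀ (by positivity) (by norm_num)]
          nlinarith [Nat.cast_nonneg (α := ℝ) m]
        linarith
      · push_neg at hs2
        have hle : ∑ i, u i ^ 2 ≤ (Finset.univ : Finset (Fin (m+1))).card • (1/(4*((m:ℝ)+1))) := by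
          apply Finset.sum_le_card_nsmul
          intro l _
          exact (hcon l (Or.inr hs2)).le
        rw [Finset.card_univ, Fintype.card_fin, nsmul_eq_mul] at hle
        push_cast at hle
        have heq : ((m:ℝ)+1) * (1/(4*((m:ℝ)+1))) = 1/4 := by
          rw [mul_one_div, div_eq_div_iff (by positivity) (by norm_num)]
          ring
        rw [heq] at hle
        linarith
    obtain ⟨l, hcond, hul⟩ := hgood
    refine Set.mem_iUnion.2 ⟨l, ?_⟩
    rw [if_pos hcond]
    -- u is on the graph over coordinates ≠ l
    set x : Fin m → ℝ := fun t => u (l.succAbove t) with hxdef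
    have hxsum : ∑ t, x t ^ 2 = 1 - u l ^ 2 := by
      have h5 := Fin.sum_univ_succAbove (fun i => u i ^ 2) l
      rw [hsum] at h5
      simp only [hxdef]
      linarith
    have hxD : x ∈ Dom m := by
      simp only [Dom, Set.mem_setOf_eq, hxsum]
      have : ((m:ℕ):ℝ) + 1 = ((m+1:ℕ):ℝ) := by push_cast; ring
      linarith
    have hxT : x ∈ T l := by
      refine ⟨hxD, fun p hp => ?_⟩
      have hxp : x p = u j := by simp only [hxdef]; rw [hp]
      rw [hxp]
      exact huj
    have hGeq : ∀ σ : ℝ, σ * Real.sqrt (1 - ∑ t, x t ^ 2) = u l → G l σ x = u := by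
      intro σ hσu
      have heq : G l σ x = (WithLp.equiv 2 (Fin (m+1) → ℝ)).symm
          (l.insertNth ((WithLp.equiv 2 (Fin (m+1) → ℝ)) u l)
            (l.removeNth ((WithLp.equiv 2 (Fin (m+1) → ℝ)) u))) := by
        rw [G, hσu]; rfl
      rw [heq, Fin.insertNth_self_removeNth]
      exact (WithLp.equiv 2 (Fin (m+1) → ℝ)).symm_apply_apply u
    have hsq : Real.sqrt (1 - ∑ t, x t ^ 2) = |u l| := by
      rw [hxsum]
      rw [show (1 : ℝ) - (1 - u l ^ 2) = u l ^ 2 by ring]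
      exact Real.sqrt_sq_eq_abs (u l)
    by_cases hsign : 0 ≤ u l
    · left
      exact ⟨x, hxT, hGeq 1 (by rw [hsq, one_mul, abs_of_nonneg hsign])⟩
    · right
      exact ⟨x, hxT, hGeq (-1) (by rw [hsq]; push_neg at hsign; rw [abs_of_neg hsign]; ring)⟩
  -- assemble
  calc μH[(m:ℝ)] {u : EuclideanSpace ℝ (Fin (m+1)) | ‖u‖ = 1 ∧ |u j| ≤ s}
      ≤ μH[(m:ℝ)] (⋃ l : Fin (m+1),
          (if (l ≠ j ∨ 1/2 < s) then (G l 1 '' T l ∪ G l (-1) '' T l) else ∅)) :=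
        measure_mono hcover
    _ ≤ ∑' l : Fin (m+1), μH[(m:ℝ)]
          (if (l ≠ j ∨ 1/2 < s) then (G l 1 '' T l ∪ G l (-1) '' T l) else ∅) :=
        measure_iUnion_le _
    _ ≤ ∑' _l : Fin (m+1), (2 * ENNReal.ofReal (κ * s)) := by
        apply ENNReal.tsum_le_tsum
        intro l
        by_cases hc : (l ≠ j ∨ 1/2 < s)
        · rw [if_pos hc]
          calc μH[(m:ℝ)] (G l 1 '' T l ∪ G l (-1) '' T l)
              ≤ μH[(m:ℝ)] (G l 1 '' T l) + μH[(m:ℝ)] (G l (-1) '' T l) := measure_union_le _ _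
            _ ≤ ENNReal.ofReal (κ * s) + ENNReal.ofReal (κ * s) :=
                add_le_add (hpiece l 1 (by norm_num) hc) (hpiece l (-1) (by norm_num) hc)
            _ = 2 * ENNReal.ofReal (κ * s) := by ring
        · rw [if_neg hc]
          simp
    _ = ((m:ℕ)+1) * (2 * ENNReal.ofReal (κ * s)) := by
        rw [tsum_fintype]
        rw [Finset.sum_const, Finset.card_univ, Fintype.card_fin, nsmul_eq_mul]
        push_cast
        ring
    _ ≤ ENNReal.ofReal ((((m:ℝ)+1) * 2 * κ) * s) := by
        have h1 : (((m:ℝ)+1) * 2 * κ) * s = ((m+1:ℕ):ℝ) * (2 * (κ * s)) := by push_cast; ring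
        rw [h1, ENNReal.ofReal_mul (by positivity : (0:ℝ) ≤ ((m+1:ℕ):ℝ)),
          ENNReal.ofReal_mul (by norm_num : (0:ℝ) ≤ 2), ENNReal.ofReal_natCast,
          ENNReal.ofReal_ofNat]
        apply le_of_eq
        push_cast
        ring

end Stmt15Aux

/-- Key real-exponent identity for summing the dyadic series. -/
lemma rid (q C ε₀ : ℝ) (i : ℕ) :
    ε₀ ^ (-q) * ((1/2:ℝ)^(i+1)) ^ (-q) * (C * (1/2:ℝ)^i)
      = (ε₀ ^ (-q) * 2 ^ q * C) * ((2:ℝ) ^ (q-1))^i := by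
  have e1 : ((1/2:ℝ))^(i+1) = (2:ℝ) ^ (-((i:ℝ)+1)) := by
    have hc : ((i+1:ℕ):ℝ) = (i:ℝ)+1 := by push_cast; ring
    rw [one_div, inv_pow, ← Real.rpow_natCast 2 (i+1), hc,
      ← Real.rpow_neg (by norm_num : (0:ℝ) ≤ 2)]
  have e2 : ((1/2:ℝ))^i = (2:ℝ) ^ (-(i:ℝ)) := by
    rw [one_div, inv_pow, ← Real.rpow_natCast 2 i, ← Real.rpow_neg (by norm_num : (0:ℝ) ≤ 2)]
  have e3 : ((2:ℝ)^(q-1))^i = (2:ℝ) ^ ((q-1)*(i:ℝ)) := by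
    rw [← Real.rpow_natCast ((2:ℝ)^(q-1)) i, ← Real.rpow_mul (by norm_num : (0:ℝ) ≤ 2)]
  rw [e1, e2, e3, ← Real.rpow_mul (by norm_num : (0:ℝ) ≤ 2)]
  have e4 : (2:ℝ) ^ (-((i:ℝ)+1) * (-q)) * (2:ℝ) ^ (-(i:ℝ))
      = (2:ℝ) ^ q * (2:ℝ) ^ ((q-1)*(i:ℝ)) := by
    rw [← Real.rpow_add (by norm_num : (0:ℝ) < 2), ← Real.rpow_add (by norm_num : (0:ℝ) < 2)]
    congr 1
    ring
  linear_combination (ε₀ ^ (-q) * C) * e4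


/-- Cross-polytope dual quermassintegral estimate, case `0 < q < 1`: there is a constant `c`
depending only on `q`, `k`, `n`, `ε₀` such that for all `a_i > 0` with `a_i > ε₀` for `i > k`,
`(1/q) log ∫_{S^{n-1}} (Σ a_i|u·e_i|)^{-q} du ≤ c`. -/
theorem stmt15 {n : ℕ} (q : ℝ) (hq0 : 0 < q) (hq1 : q < 1) (k : ℕ) (hk1 : 1 ≤ k)
    (hkn : k < n) (b : OrthonormalBasis (Fin n) ℝ (Vn n)) (ε₀ : ℝ) (hε : 0 < ε₀) :
    ∃ c : ℝ, ∀ a : Fin n → ℝ, (∀ i, 0 < a i) → (∀ i : Fin n, k ≤ i.val → ε₀ < a i) →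
      (1 / q) * Real.log
          (∫ u in sphere (0 : Vn n) 1, (∑ i, a i * |⟪u, b i⟫|) ^ (-q) ∂ μH[(n : ℝ) - 1]) ≤
        c := by
  classical
  obtain ⟨m, rfl⟩ : ∃ m, n = m + 1 := ⟨n - 1, by omega⟩
  have hm : 1 ≤ m := by omega
  set j : Fin (m+1) := ⟨k, hkn⟩ with hj
  obtain ⟨C, hC0, hC⟩ := Stmt15Aux.band_bound m hm j
  -- transfer the band estimate to `Vn (m+1)` via the isometry `b.repr`
  have hband : ∀ s : ℝ, 0 < s → s ≤ 1 →
      μH[(m:ℝ)] {u : Vn (m+1) | ‖u‖ = 1 ∧ |⟪u, b j⟫| ≤ s} ≤ ENNReal.ofReal (C * s) := by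
    intro s h0 h1
    set e := b.repr.toIsometryEquiv with he
    have hsub : {u : Vn (m+1) | ‖u‖ = 1 ∧ |⟪u, b j⟫| ≤ s}
        ⊆ e ⁻¹' {v : EuclideanSpace ℝ (Fin (m+1)) | ‖v‖ = 1 ∧ |v j| ≤ s} := by
      intro u hu
      have h2 : ‖e u‖ = ‖u‖ := b.repr.norm_map u
      have h3 : e u j = ⟪u, b j⟫ := by
        show b.repr u j = _
        rw [b.repr_apply_apply, real_inner_comm]
      exact ⟨by rw [h2]; exact hu.1, by rw [h3]; exact hu.2⟩
    calc μH[(m:ℝ)] {u : Vn (m+1) | ‖u‖ = 1 ∧ |⟪u, b j⟫| ≤ s}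
        ≤ μH[(m:ℝ)] (e ⁻¹' {v : EuclideanSpace ℝ (Fin (m+1)) | ‖v‖ = 1 ∧ |v j| ≤ s}) :=
          measure_mono hsub
      _ = μH[(m:ℝ)] {v : EuclideanSpace ℝ (Fin (m+1)) | ‖v‖ = 1 ∧ |v j| ≤ s} :=
          e.hausdorffMeasure_preimage (m:ℝ) _
      _ ≤ ENNReal.ofReal (C * s) := hC s h0 h1
  -- constants
  set r : ℝ := (2:ℝ) ^ (q - 1) with hr
  have hr0 : 0 ≤ r := Real.rpow_nonneg (by norm_num) _
  have hr1 : r < 1 := Real.rpow_lt_one_of_one_lt_of_neg (by norm_num) (by linarith)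
  set K1 : ℝ := ε₀ ^ (-q) * 2 ^ q * C with hK1
  set M : ℝ≥0∞ := ENNReal.ofReal K1 * (1 - ENNReal.ofReal r)⁻¹ with hM
  have hMne : M ≠ ∞ := by
    apply ENNReal.mul_ne_top ENNReal.ofReal_ne_top
    rw [ENNReal.inv_ne_top]
    rw [ne_eq, tsub_eq_zero_iff_le, not_le]
    exact ENNReal.ofReal_lt_one.2 hr1
  refine ⟨(1/q) * Real.log (max M.toReal 1), ?_⟩
  intro a ha1 ha2
  -- the measure-index cast
  rw [show ((m+1:ℕ):ℝ) - 1 = ((m:ℕ):ℝ) by push_cast; ring]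
  set f : Vn (m+1) → ℝ := fun u => (∑ i, a i * |⟪u, b i⟫|) ^ (-q) with hf
  have hbase : Continuous fun u : Vn (m+1) => ∑ i, a i * |⟪u, b i⟫| := by
    apply continuous_finset_sum
    intro i _
    exact continuous_const.mul (Continuous.abs (Continuous.inner continuous_id continuous_const))
  have hbasepos : ∀ u : Vn (m+1), u ∈ sphere (0 : Vn (m+1)) 1 →
      0 < ∑ i, a i * |⟪u, b i⟫| := by
    intro u hu
    have hnorm : ‖u‖ = 1 := by rwa [mem_sphere_zero_iff_norm] at hu
    by_contra hcon
    push_neg at hcon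
    have hterm0 : ∀ i, a i * |⟪u, b i⟫| = 0 := by
      intro i
      have hnn : ∀ i' ∈ Finset.univ, 0 ≤ a i' * |⟪u, b i'⟫| :=
        fun i' _ => mul_nonneg (ha1 i').le (abs_nonneg _)
      have h1 : ∑ i', a i' * |⟪u, b i'⟫| = 0 :=
        le_antisymm hcon (Finset.sum_nonneg hnn)
      exact (Finset.sum_eq_zero_iff_of_nonneg hnn).1 h1 i (Finset.mem_univ i)
    have hcoord : ∀ i, ⟪u, b i⟫ = 0 := by
      intro i
      have := hterm0 i
      have ha := (ha1 i).ne'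
      rcases mul_eq_zero.1 this with h | h
      · exact absurd h ha
      · exact abs_eq_zero.1 h
    have hu0 : u = 0 := by
      have : ∀ i, b.repr u i = 0 := by
        intro i
        rw [b.repr_apply_apply, real_inner_comm]
        exact hcoord i
      have h2 : b.repr u = 0 := by ext i; exact this i
      exact b.repr.injective (h2.trans (by simp))
    rw [hu0, norm_zero] at hnorm
    exact absurd hnorm (by norm_num)
  have hf0 : ∀ u, 0 ≤ f u := fun u =>
    Real.rpow_nonneg (Finset.sum_nonneg fun i _ => mul_nonneg (ha1 i).le (abs_nonneg _)) _
  have hfm : AEStronglyMeasurable f (μH[(m:ℝ)].restrict (sphere (0 : Vn (m+1)) 1)) := by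
    apply ContinuousOn.aestronglyMeasurable _ Metric.isClosed_sphere.measurableSet
    intro u hu
    exact (hbase.continuousAt.rpow_const (Or.inl (hbasepos u hu).ne')).continuousWithinAt
  rw [MeasureTheory.integral_eq_lintegral_of_nonneg_ae (Filter.Eventually.of_forall hf0) hfm]
  -- the dyadic decomposition
  set A : ℕ → Set (Vn (m+1)) := fun i =>
    {u | (1/2:ℝ)^(i+1) < |⟪u, b j⟫| ∧ |⟪u, b j⟫| ≤ (1/2:ℝ)^i} with hA
  have hinnercont : Continuous fun u : Vn (m+1) => |⟪u, b j⟫| :=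
    Continuous.abs (Continuous.inner continuous_id continuous_const)
  have hAmeas : ∀ i, MeasurableSet (A i) := fun i =>
    hinnercont.measurable measurableSet_Ioc
  set cs : ℕ → ℝ≥0∞ := fun i =>
    ENNReal.ofReal (ε₀ ^ (-q) * ((1/2:ℝ)^(i+1)) ^ (-q)) with hcs
  -- the zero set is null
  have hZmeas : MeasurableSet {u : Vn (m+1) | ⟪u, b j⟫ = 0} :=
    (isClosed_eq (Continuous.inner continuous_id continuous_const) continuous_const).measurableSet
  have hZ : μH[(m:ℝ)] ({u : Vn (m+1) | ⟪u, b j⟫ = 0} ∩ sphere 0 1) = 0 := by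
    have hle : ∀ i : ℕ,
        μH[(m:ℝ)] ({u : Vn (m+1) | ⟪u, b j⟫ = 0} ∩ sphere 0 1)
          ≤ ENNReal.ofReal (C * (1/2:ℝ)^(i+1)) := by
      intro i
      refine le_trans (measure_mono ?_) (hband ((1/2:ℝ)^(i+1)) (by positivity)
        (by apply pow_le_one₀ <;> norm_num))
      rintro u ⟨hu0, hu1⟩
      refine ⟨by rwa [mem_sphere_zero_iff_norm] at hu1, ?_⟩
      rw [Set.mem_setOf_eq] at hu0
      rw [hu0]
      simp [pow_nonneg]
    have htend : Filter.Tendsto (fun i : ℕ => ENNReal.ofReal (C * (1/2:ℝ)^(i+1)))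
        Filter.atTop (𝓝 0) := by
      have h2 : Filter.Tendsto (fun i : ℕ => C * (1/2:ℝ)^(i+1)) Filter.atTop (𝓝 0) := by
        have h3 := tendsto_pow_atTop_nhds_zero_of_lt_one
          (by norm_num : (0:ℝ) ≤ 1/2) (by norm_num : (1/2:ℝ) < 1)
        have h4 := h3.comp (Filter.tendsto_add_atTop_nat 1)
        have h5 := h4.const_mul C
        simpa [Function.comp] using h5
      have := ENNReal.tendsto_ofReal h2
      simpa using this
    exact le_antisymm (ge_of_tendsto' htend hle) zero_le
  -- pointwise domination
  have hpt : ∀ u ∈ sphere (0 : Vn (m+1)) 1, ⟪u, b j⟫ ≠ 0 →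
      ENNReal.ofReal (f u) ≤ ∑' i, (A i).indicator (fun _ => cs i) u := by
    intro u hu hne
    have hunorm : ‖u‖ = 1 := by rwa [mem_sphere_zero_iff_norm] at hu
    set t := |⟪u, b j⟫| with hts
    have ht0 : 0 < t := abs_pos.2 hne
    have ht1 : t ≤ 1 := by
      have h1 := abs_real_inner_le_norm u (b j)
      rw [hunorm, b.orthonormal.1 j] at h1
      simpa using h1
    obtain ⟨i, hi1, hi2⟩ : ∃ i : ℕ, (1/2:ℝ)^(i+1) < t ∧ t ≤ (1/2:ℝ)^i := by
      have hex : ∃ N : ℕ, (1/2:ℝ)^(N+1) < t := by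
        obtain ⟨N, hN⟩ := exists_pow_lt_of_lt_one ht0 (by norm_num : (1/2:ℝ) < 1)
        exact ⟨N, lt_of_le_of_lt
          (pow_le_pow_of_le_one (by norm_num) (by norm_num) (Nat.le_succ N)) hN⟩
      refine ⟨Nat.find hex, Nat.find_spec hex, ?_⟩
      rcases Nat.eq_zero_or_pos (Nat.find hex) with h0 | h0
      · rw [h0]; simpa using ht1
      · have h6 : ¬ (1/2:ℝ)^((Nat.find hex - 1) + 1) < t :=
          Nat.find_min hex (by omega)
        rw [show Nat.find hex - 1 + 1 = Nat.find hex by omega] at h6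
        exact not_lt.1 h6
    have hmem : u ∈ A i := ⟨hi1, hi2⟩
    have hle2 : ENNReal.ofReal (f u) ≤ cs i := by
      apply ENNReal.ofReal_le_ofReal
      have hS : ε₀ * ((1/2:ℝ)^(i+1)) < ∑ i', a i' * |⟪u, b i'⟫| := by
        have h1 : a j * |⟪u, b j⟫| ≤ ∑ i', a i' * |⟪u, b i'⟫| :=
          Finset.single_le_sum (f := fun i' => a i' * |⟪u, b i'⟫|)
            (fun i' _ => mul_nonneg (ha1 i').le (abs_nonneg _)) (Finset.mem_univ j)
        have h2 : ε₀ < a j := ha2 j (le_of_eq rfl)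
        have h3 : ε₀ * ((1/2:ℝ)^(i+1)) < a j * t :=
          mul_lt_mul'' h2 hi1 hε.le (by positivity)
        rw [← hts] at h1
        linarith
      calc f u ≤ (ε₀ * ((1/2:ℝ)^(i+1))) ^ (-q) :=
            Real.rpow_le_rpow_of_nonpos (by positivity) hS.le (by linarith)
        _ = ε₀ ^ (-q) * ((1/2:ℝ)^(i+1)) ^ (-q) :=
            Real.mul_rpow hε.le (by positivity)
    calc ENNReal.ofReal (f u) ≤ cs i := hle2
      _ = (A i).indicator (fun _ => cs i) u := (Set.indicator_of_mem hmem (fun _ => cs i)).symm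
      _ ≤ ∑' i', (A i').indicator (fun _ => cs i') u := ENNReal.le_tsum i
  -- bound the lintegral
  have hlint : ∫⁻ u in sphere (0 : Vn (m+1)) 1, ENNReal.ofReal (f u) ∂μH[(m:ℝ)] ≤ M := by
    have h1 : ∫⁻ u in sphere (0 : Vn (m+1)) 1, ENNReal.ofReal (f u) ∂μH[(m:ℝ)]
        ≤ ∫⁻ u in sphere (0 : Vn (m+1)) 1,
            (∑' i, (A i).indicator (fun _ => cs i) u) ∂μH[(m:ℝ)] := by
      apply lintegral_mono_ae
      have hae1 : ∀ᵐ u ∂(μH[(m:ℝ)].restrict (sphere (0 : Vn (m+1)) 1)),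
          u ∈ sphere (0 : Vn (m+1)) 1 := ae_restrict_mem Metric.isClosed_sphere.measurableSet
      have hae2 : ∀ᵐ u ∂(μH[(m:ℝ)].restrict (sphere (0 : Vn (m+1)) 1)),
          ⟪u, b j⟫ ≠ 0 := by
        rw [Filter.Eventually]
        rw [mem_ae_iff]
        have hcompl : {u : Vn (m+1) | ⟪u, b j⟫ ≠ 0}ᶜ = {u : Vn (m+1) | ⟪u, b j⟫ = 0} := by
          ext u; simp
        rw [hcompl, Measure.restrict_apply hZmeas]
        exact hZ
      filter_upwards [hae1, hae2] with u h1 h2 using hpt u h1 h2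
    have h2 : ∫⁻ u in sphere (0 : Vn (m+1)) 1,
          (∑' i, (A i).indicator (fun _ => cs i) u) ∂μH[(m:ℝ)]
        = ∑' i, cs i * (μH[(m:ℝ)].restrict (sphere (0 : Vn (m+1)) 1)) (A i) := by
      rw [lintegral_tsum (fun i => (measurable_const.indicator (hAmeas i)).aemeasurable)]
      congr 1
      funext i
      rw [lintegral_indicator (hAmeas i), setLIntegral_const]
    have h3 : ∀ i : ℕ, (μH[(m:ℝ)].restrict (sphere (0 : Vn (m+1)) 1)) (A i)
        ≤ ENNReal.ofReal (C * (1/2:ℝ)^i) := by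
      intro i
      rw [Measure.restrict_apply (hAmeas i)]
      refine le_trans (measure_mono ?_) (hband ((1/2:ℝ)^i) (by positivity)
        (by apply pow_le_one₀ <;> norm_num))
      rintro u ⟨hu1, hu2⟩
      exact ⟨by rwa [mem_sphere_zero_iff_norm] at hu2, hu1.2⟩
    calc ∫⁻ u in sphere (0 : Vn (m+1)) 1, ENNReal.ofReal (f u) ∂μH[(m:ℝ)]
        ≤ ∑' i, cs i * (μH[(m:ℝ)].restrict (sphere (0 : Vn (m+1)) 1)) (A i) := by
          rw [← h2]; exact h1
      _ ≤ ∑' i, ENNReal.ofReal K1 * (ENNReal.ofReal r) ^ i := by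
          apply ENNReal.tsum_le_tsum
          intro i
          calc cs i * (μH[(m:ℝ)].restrict (sphere (0 : Vn (m+1)) 1)) (A i)
              ≤ cs i * ENNReal.ofReal (C * (1/2:ℝ)^i) := mul_le_mul_right (h3 i) _
            _ = ENNReal.ofReal (ε₀ ^ (-q) * ((1/2:ℝ)^(i+1)) ^ (-q) * (C * (1/2:ℝ)^i)) := by
                rw [hcs, ← ENNReal.ofReal_mul (by positivity)]
            _ = ENNReal.ofReal (K1 * r ^ i) := by rw [rid q C ε₀ i, hK1, hr]
            _ = ENNReal.ofReal K1 * (ENNReal.ofReal r) ^ i := by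
                rw [ENNReal.ofReal_mul (by rw [hK1]; positivity), ENNReal.ofReal_pow hr0]
      _ = ENNReal.ofReal K1 * (1 - ENNReal.ofReal r)⁻¹ := by
          rw [ENNReal.tsum_mul_left, ENNReal.tsum_geometric]
      _ = M := hM.symm
  -- conclude
  have hInonneg : (0:ℝ) ≤ (∫⁻ u in sphere (0 : Vn (m+1)) 1,
      ENNReal.ofReal (f u) ∂μH[(m:ℝ)]).toReal := ENNReal.toReal_nonneg
  have hIle : (∫⁻ u in sphere (0 : Vn (m+1)) 1,
      ENNReal.ofReal (f u) ∂μH[(m:ℝ)]).toReal ≤ max M.toReal 1 :=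
    le_trans (ENNReal.toReal_mono hMne hlint) (le_max_left _ _)
  set I := (∫⁻ u in sphere (0 : Vn (m+1)) 1, ENNReal.ofReal (f u) ∂μH[(m:ℝ)]).toReal
  have hlogmax : 0 ≤ Real.log (max M.toReal 1) := Real.log_nonneg (le_max_right _ _)
  rcases eq_or_lt_of_le hInonneg with h0 | hpos
  · rw [← h0, Real.log_zero, mul_zero]
    positivity
  · have hlog : Real.log I ≤ Real.log (max M.toReal 1) := Real.log_le_log hpos hIle
    have h1q : 0 ≤ 1/q := by positivity
    exact mul_le_mul_of_nonneg_left hlog h1q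
end
end
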